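/- Let α be a real number. Then the following two conditions hold simultaneously — (i) α > 0, and (ii) for every real t and every complex number w satisfying (3/2 − α·i·t)·w² + (−2 + (2α−2)·i·t)·w + (1/2 + (1−α)·i·t) = 0 one has |w| ≤ 1 — if and only if α ≥ 3/4. (This is the statement that the generalized BDF2 method is A-stable if and only if α ≥ 3/4.) -/

import Mathlib

open Complex in
private lemma bdf2_key_identity (a b c w₁ w₂ : ℂ) (hb : b = -a*(w₁+w₂)) (hc : c = a*(w₁*w₂)) :
    (starRingEnd ℂ a) * b - (starRingEnd ℂ b) * c
      = -(a * starRingEnd ℂ a) * (w₁*(1 - w₂ * starRingEnd ℂ w₂) + w₂*(1 - w₁ * starRingEnd ℂ w₁)) := by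
  subst hb hc; simp only [map_neg, map_mul, map_add]; ring

open Complex in
set_option maxHeartbeats 1000000 in
private lemma bdf2_forward (α : ℝ) (hα : 0 < α)
    (H : ∀ t : ℝ, ∀ w : ℂ,
        (3/2 - (α : ℂ) * Complex.I * (t : ℂ)) * w ^ 2
          + (-2 + (2 * (α : ℂ) - 2) * Complex.I * (t : ℂ)) * w
          + (1/2 + (1 - (α : ℂ)) * Complex.I * (t : ℂ)) = 0 →
        ‖w‖ ≤ 1) : α ≥ 3/4 := by
  set a : ℂ := 3/2 - (α : ℂ) * Complex.I with ha_def
  set b : ℂ := -2 + (2 * (α : ℂ) - 2) * Complex.I with hb_def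
  set c : ℂ := 1/2 + (1 - (α : ℂ)) * Complex.I with hc_def
  have ha : a ≠ 0 := by
    intro h
    have := congrArg Complex.re h
    simp [ha_def] at this
  set s : ℂ := (b^2 - 4*a*c) ^ ((2 : ℂ)⁻¹) with hs_def
  have hΔ : s^2 = b^2 - 4*a*c := by
    rw [hs_def]
    exact_mod_cast Complex.cpow_nat_inv_pow _ (two_ne_zero)
  set w₁ : ℂ := (-b + s)/(2*a) with hw1_def
  set w₂ : ℂ := (-b - s)/(2*a) with hw2_def
  have h2a : (2:ℂ)*a ≠ 0 := by
    simp [ha]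
  have h4a : (4:ℂ)*a ≠ 0 := by
    simp [ha]
  have hcancel : ∀ z : ℂ, z * (4*a) = 0 → z = 0 := by
    intro z hz
    rcases mul_eq_zero.mp hz with h|h
    · exact h
    · exact absurd h h4a
  have e1 : w₁ * (2*a) = -b + s := by
    rw [hw1_def]; field_simp
  have e2 : w₂ * (2*a) = -b - s := by
    rw [hw2_def]; field_simp
  have hroot1 : a * w₁ ^ 2 + b * w₁ + c = 0 := by
    apply hcancel
    linear_combination (w₁*(2*a) + s + b) * e1 + hΔ
  have hroot2 : a * w₂ ^ 2 + b * w₂ + c = 0 := by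
    apply hcancel
    linear_combination (w₂*(2*a) + b - s) * e2 + hΔ
  have hu : ‖w₁‖ ≤ 1 := by
    have := H 1 w₁
    simp only [Complex.ofReal_one, mul_one] at this
    exact this hroot1
  have hv : ‖w₂‖ ≤ 1 := by
    have := H 1 w₂
    simp only [Complex.ofReal_one, mul_one] at this
    exact this hroot2
  have hb2 : b = -a*(w₁+w₂) := by
    have h0 : (b - -a*(w₁+w₂)) * (4*a) = 0 := by
      linear_combination (2*a) * e1 + (2*a) * e2
    have := hcancel _ h0
    have h9 : b - -a*(w₁+w₂) = 0 := this
    linear_combination h9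
  have hc2 : c = a*(w₁*w₂) := by
    have h0 : (c - a*(w₁*w₂)) * (4*a) = 0 := by
      linear_combination hΔ - (2*a*w₂)*e1 - (-b+s)*e2
    have h9 := hcancel _ h0
    linear_combination h9
  have key := bdf2_key_identity a b c w₁ w₂ hb2 hc2
  rw [show -(a * starRingEnd ℂ a) = -((Complex.normSq a : ℝ) : ℂ) by rw [Complex.mul_conj]] at key
  set u : ℝ := ‖w₁‖ with hu_def
  set v : ℝ := ‖w₂‖ with hv_def
  have hu0 : 0 ≤ u := norm_nonneg _
  have hv0 : 0 ≤ v := norm_nonneg _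
  have hq1 : w₁ * (starRingEnd ℂ) w₁ = ((u^2 : ℝ) : ℂ) := by
    rw [Complex.mul_conj]; norm_cast; rw [← Complex.sq_norm]
  have hq2 : w₂ * (starRingEnd ℂ) w₂ = ((v^2 : ℝ) : ℂ) := by
    rw [Complex.mul_conj]; norm_cast; rw [← Complex.sq_norm]
  rw [hq1, hq2] at key
  have hm : (starRingEnd ℂ a) * b - (starRingEnd ℂ b) * c
      = ((-2*α : ℝ) : ℂ) + ((-2 : ℝ) : ℂ) * Complex.I := by
    simp only [ha_def, hb_def, hc_def, map_add, map_sub, map_mul, map_neg, map_div₀,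
      map_ofNat, map_one, Complex.conj_I, Complex.conj_ofReal]
    push_cast
    linear_combination (2*(α:ℂ)-2) * Complex.I_sq
  have habs_m_sq : (‖(starRingEnd ℂ a) * b - (starRingEnd ℂ b) * c‖)^2
      = 4*α^2 + 4 := by
    rw [hm, Complex.sq_norm, Complex.normSq_add_mul_I]; ring
  have hna : Complex.normSq a = 9/4 + α^2 := by
    simp [ha_def, Complex.normSq_apply]; ring
  have hnc : Complex.normSq c = 1/4 + (1-α)^2 := by
    simp [hc_def, Complex.normSq_apply]; ring
  -- upper bound on abs m
  have t1 : ‖w₁*(1 - ((v^2:ℝ):ℂ))‖ = u * (1 - v^2) := by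
    rw [norm_mul]
    have e : (1 - ((v^2:ℝ):ℂ)) = (((1 - v^2 : ℝ)) : ℂ) := by push_cast; ring
    rw [e, Complex.norm_real, Real.norm_eq_abs, _root_.abs_of_nonneg (show (0:ℝ) ≤ 1 - v^2 by nlinarith)]
  have t2 : ‖w₂*(1 - ((u^2:ℝ):ℂ))‖ = v * (1 - u^2) := by
    rw [norm_mul]
    have e : (1 - ((u^2:ℝ):ℂ)) = (((1 - u^2 : ℝ)) : ℂ) := by push_cast; ring
    rw [e, Complex.norm_real, Real.norm_eq_abs, _root_.abs_of_nonneg (show (0:ℝ) ≤ 1 - u^2 by nlinarith)]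
  have htri : ‖w₁*(1 - ((v^2:ℝ):ℂ)) + w₂*(1 - ((u^2:ℝ):ℂ))‖
      ≤ u * (1 - v^2) + v * (1 - u^2) := by
    calc ‖w₁*(1 - ((v^2:ℝ):ℂ)) + w₂*(1 - ((u^2:ℝ):ℂ))‖
        ≤ ‖w₁*(1 - ((v^2:ℝ):ℂ))‖ + ‖w₂*(1 - ((u^2:ℝ):ℂ))‖ :=
          norm_add_le _ _
      _ = u * (1 - v^2) + v * (1 - u^2) := by rw [t1, t2]
  have hEE : u * (1 - v^2) + v * (1 - u^2) ≤ 1 - u^2*v^2 := by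
    nlinarith [mul_nonneg (mul_nonneg (show (0:ℝ) ≤ 1-u by linarith) (show (0:ℝ) ≤ 1-v by linarith)) (show (0:ℝ) ≤ 1-u*v by nlinarith)]
  have habs_m : ‖(starRingEnd ℂ a) * b - (starRingEnd ℂ b) * c‖
      = Complex.normSq a * ‖w₁*(1 - ((v^2:ℝ):ℂ)) + w₂*(1 - ((u^2:ℝ):ℂ))‖ := by
    rw [key, show -((Complex.normSq a : ℝ):ℂ) * (w₁*(1 - ((v^2:ℝ):ℂ)) + w₂*(1 - ((u^2:ℝ):ℂ)))
        = ((Complex.normSq a : ℝ):ℂ) * -(w₁*(1 - ((v^2:ℝ):ℂ)) + w₂*(1 - ((u^2:ℝ):ℂ))) from by ring,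
      norm_mul, Complex.norm_real, Real.norm_eq_abs, _root_.abs_of_nonneg (Complex.normSq_nonneg a),
      norm_neg]
  have hcav : ‖c‖ = ‖a‖ * (u * v) := by
    rw [hc2, norm_mul, norm_mul]
  have hids : Complex.normSq a * (u^2*v^2) = Complex.normSq c := by
    rw [← Complex.sq_norm c, hcav, mul_pow]
    simp only [Complex.sq_norm]
    ring
  have hnapos : (0:ℝ) < Complex.normSq a := by rw [hna]; positivity
  have hfinal : ‖(starRingEnd ℂ a) * b - (starRingEnd ℂ b) * c‖
      ≤ Complex.normSq a - Complex.normSq c := by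
    rw [habs_m, ← hids]
    have h6 : ‖w₁*(1 - ((v^2:ℝ):ℂ)) + w₂*(1 - ((u^2:ℝ):ℂ))‖ ≤ 1 - u^2*v^2 :=
      le_trans htri hEE
    nlinarith [h6]
  rw [hna, hnc] at hfinal
  have hmnn := norm_nonneg ((starRingEnd ℂ a) * b - (starRingEnd ℂ b) * c)
  nlinarith [habs_m_sq, hfinal, hmnn]

open Complex in
set_option maxHeartbeats 1000000 in
private lemma bdf2_reverse (α t : ℝ) (hα : α ≥ 3/4) (w : ℂ)
    (hroot : (3/2 - (α : ℂ) * Complex.I * (t : ℂ)) * w ^ 2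
          + (-2 + (2 * (α : ℂ) - 2) * Complex.I * (t : ℂ)) * w
          + (1/2 + (1 - (α : ℂ)) * Complex.I * (t : ℂ)) = 0) :
    ‖w‖ ≤ 1 := by
  by_contra hu'
  push_neg at hu'
  set a : ℂ := 3/2 - (α : ℂ) * Complex.I * (t : ℂ) with ha_def
  set b : ℂ := -2 + (2 * (α : ℂ) - 2) * Complex.I * (t : ℂ) with hb_def
  set c : ℂ := 1/2 + (1 - (α : ℂ)) * Complex.I * (t : ℂ) with hc_def
  have ha : a ≠ 0 := by
    intro h
    have := congrArg Complex.re h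
    simp [ha_def] at this
  have hc0 : c ≠ 0 := by
    intro h
    have := congrArg Complex.re h
    simp [hc_def] at this
  have hw : w ≠ 0 := by
    intro h
    rw [h] at hroot
    simp at hroot
    exact hc0 hroot
  set w' : ℂ := c / (a * w) with hw'_def
  have h1 : c = a * (w * w') := by
    rw [hw'_def, ← mul_assoc]; field_simp
  have h2 : b = -a * (w + w') := by
    refine mul_right_cancel₀ hw ?_
    linear_combination hroot - h1
  have key := bdf2_key_identity a b c w w' h2 h1
  have hm : (starRingEnd ℂ a) * b - (starRingEnd ℂ b) * c
      = ((-2 + (2-2*α)*t^2 : ℝ) : ℂ) + ((-2*t : ℝ) : ℂ) * Complex.I := by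
    simp only [ha_def, hb_def, hc_def, map_add, map_sub, map_mul, map_neg, map_div₀,
      map_ofNat, map_one, Complex.conj_I, Complex.conj_ofReal]
    push_cast
    linear_combination ((2*(α:ℂ)-2)*(t:ℂ)^2) * Complex.I_sq
  have habs_m_sq : (‖(starRingEnd ℂ a) * b - (starRingEnd ℂ b) * c‖)^2
      = (-2 + (2-2*α)*t^2)^2 + (-2*t)^2 := by
    rw [hm, Complex.sq_norm, Complex.normSq_add_mul_I]
  have hna : Complex.normSq a = 9/4 + α^2*t^2 := by
    simp [ha_def, Complex.normSq_apply]; ring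
  have hnc : Complex.normSq c = 1/4 + (1-α)^2*t^2 := by
    simp [hc_def, Complex.normSq_apply]; ring
  set u : ℝ := ‖w‖ with hu_def
  set v : ℝ := ‖w'‖ with hv_def
  have hu1 : 1 < u := hu'
  have hv0 : 0 ≤ v := norm_nonneg _
  have hu0 : 0 < u := lt_trans one_pos hu1
  have hcav : ‖c‖ = ‖a‖ * (u * v) := by
    rw [h1, norm_mul, norm_mul]
  have habspos : (0:ℝ) < ‖a‖ := norm_pos_iff.mpr ha
  have hca : ‖c‖ < ‖a‖ := by
    have h4 : (‖c‖)^2 < (‖a‖)^2 := by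
      rw [Complex.sq_norm, Complex.sq_norm, hna, hnc]
      nlinarith [sq_nonneg t]
    nlinarith [norm_nonneg c, norm_nonneg a]
  have huv1 : u * v < 1 := by nlinarith [hcav ▸ hca]
  have hv1 : v < 1 := by nlinarith
  have hw2 : w' * (starRingEnd ℂ) w' = ((v^2 : ℝ) : ℂ) := by
    rw [Complex.mul_conj]; norm_cast; rw [← Complex.sq_norm]
  have hw1 : w * (starRingEnd ℂ) w = ((u^2 : ℝ) : ℂ) := by
    rw [Complex.mul_conj]; norm_cast; rw [← Complex.sq_norm]
  rw [hw1, hw2] at key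
  -- lower bound
  have t1 : ‖w*(1 - ((v^2:ℝ):ℂ))‖ = u * (1 - v^2) := by
    rw [norm_mul]
    have e : (1 - ((v^2:ℝ):ℂ)) = (((1 - v^2 : ℝ)) : ℂ) := by push_cast; ring
    rw [e, Complex.norm_real, Real.norm_eq_abs, _root_.abs_of_nonneg (show (0:ℝ) ≤ 1 - v^2 by nlinarith)]
  have t2 : ‖w'*(1 - ((u^2:ℝ):ℂ))‖ = v * (u^2 - 1) := by
    rw [norm_mul]
    have e : (1 - ((u^2:ℝ):ℂ)) = (((1 - u^2 : ℝ)) : ℂ) := by push_cast; ring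
    rw [e, Complex.norm_real, Real.norm_eq_abs, _root_.abs_of_nonpos (show 1 - u^2 ≤ (0:ℝ) by nlinarith)]
    ring
  have hlow : u * (1 - v^2) - v * (u^2 - 1)
      ≤ ‖w*(1 - ((v^2:ℝ):ℂ)) + w'*(1 - ((u^2:ℝ):ℂ))‖ := by
    rw [← t1, ← t2]
    have := norm_sub_norm_le (w*(1 - ((v^2:ℝ):ℂ))) (-(w'*(1 - ((u^2:ℝ):ℂ))))
    simpa [sub_neg_eq_add] using this
  -- strict inequality chain
  have hE : (1 - u^2*v^2) < u * (1 - v^2) - v * (u^2 - 1) := by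
    nlinarith [mul_pos (mul_pos (show (0:ℝ) < u - 1 by linarith) (show (0:ℝ) < 1 - v by linarith)) (show (0:ℝ) < 1 - u*v by linarith)]
  rw [show -(a * starRingEnd ℂ a) = -((Complex.normSq a : ℝ) : ℂ) by rw [Complex.mul_conj]] at key
  have habs_m : ‖(starRingEnd ℂ a) * b - (starRingEnd ℂ b) * c‖
      = Complex.normSq a * ‖w*(1 - ((v^2:ℝ):ℂ)) + w'*(1 - ((u^2:ℝ):ℂ))‖ := by
    rw [key, show -((Complex.normSq a : ℝ):ℂ) * (w*(1 - ((v^2:ℝ):ℂ)) + w'*(1 - ((u^2:ℝ):ℂ)))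
        = ((Complex.normSq a : ℝ):ℂ) * -(w*(1 - ((v^2:ℝ):ℂ)) + w'*(1 - ((u^2:ℝ):ℂ))) from by ring,
      norm_mul, Complex.norm_real, Real.norm_eq_abs, _root_.abs_of_nonneg (Complex.normSq_nonneg a),
      norm_neg]
  have hnapos : (0:ℝ) < Complex.normSq a := by rw [hna]; positivity
  have hfin1 : Complex.normSq a * (1 - u^2*v^2) <
      ‖(starRingEnd ℂ a) * b - (starRingEnd ℂ b) * c‖ := by
    rw [habs_m]
    have hlt : (1 - u^2*v^2) < ‖w*(1 - ((v^2:ℝ):ℂ)) + w'*(1 - ((u^2:ℝ):ℂ))‖ :=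
      lt_of_lt_of_le hE hlow
    exact (mul_lt_mul_iff_right₀ hnapos).mpr hlt
  -- |a|^2 (1 - u^2 v^2) = normSq a - normSq c
  have hids : Complex.normSq a * (u^2*v^2) = Complex.normSq c := by
    rw [← Complex.sq_norm c, hcav, mul_pow]
    simp only [Complex.sq_norm]
    ring
  have hupper : (‖(starRingEnd ℂ a) * b - (starRingEnd ℂ b) * c‖)^2
      ≤ (Complex.normSq a - Complex.normSq c)^2 := by
    rw [habs_m_sq, hna, hnc]
    have hkey4 : (9/4+α^2*t^2 - (1/4+(1-α)^2*t^2))^2 - ((-2+(2-2*α)*t^2)^2 + (-2*t)^2)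
        = (4*α-3)*(t^2)^2 := by ring
    nlinarith [mul_nonneg (show (0:ℝ) ≤ 4*α-3 by linarith) (sq_nonneg (t^2))]
  have hpos : 0 ≤ Complex.normSq a - Complex.normSq c := by rw [hna, hnc]; nlinarith [sq_nonneg t]
  have hcontr : Complex.normSq a - Complex.normSq c <
      ‖(starRingEnd ℂ a) * b - (starRingEnd ℂ b) * c‖ := by
    have : Complex.normSq a - Complex.normSq c = Complex.normSq a * (1 - u^2*v^2) := by
      rw [← hids]; ring
    rw [this]; exact hfin1
  nlinarith [norm_nonneg ((starRingEnd ℂ a) * b - (starRingEnd ℂ b) * c)]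

/-- A-stability of the generalized BDF2 method: the leading coefficient α is positive and
all roots of the characteristic polynomial η(it, w) lie in the closed unit disc for all
real t, if and only if α ≥ 3/4. -/
theorem generalized_BDF2_A_stable_iff (α : ℝ) :
    (0 < α ∧
      ∀ t : ℝ, ∀ w : ℂ,
        (3/2 - (α : ℂ) * Complex.I * (t : ℂ)) * w ^ 2
          + (-2 + (2 * (α : ℂ) - 2) * Complex.I * (t : ℂ)) * w
          + (1/2 + (1 - (α : ℂ)) * Complex.I * (t : ℂ)) = 0 →
        ‖w‖ ≤ 1)
    ↔ α ≥ 3/4 := by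
  constructor
  · rintro ⟨h1, h2⟩
    exact bdf2_forward α h1 h2
  · intro hα
    exact ⟨by linarith, fun t w hroot => bdf2_reverse α t hα w hroot⟩
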